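/- For all s, t ∈ μ_r, v ∈ A_1, and w ∈ A_r: v y ⋄_s w(z − z_t^δ) = (v y ⋄_s w − v ⋄_s w z_t^δ)(y ⋄_t 1). -/
import Mathlib


open FreeAlgebra

/-- Alphabet of `A_1 = ℚ⟨x,y⟩`. -/
inductive LetA : Type | x : LetA | y : LetA

/-- Alphabet of `A_r = ℚ⟨x, y_s : s ∈ μ_r⟩`; the group `G` plays the role of `μ_r`. -/
inductive LetR (G : Type) : Type | x : LetR G | y : G → LetR G

/-- `A_1 = ℚ⟨x, y⟩`. -/
abbrev A1 : Type := FreeAlgebra ℚ LetA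

/-- `A_r = ℚ⟨x, y_s : s ∈ μ_r⟩`. -/
abbrev Ar (G : Type) : Type := FreeAlgebra ℚ (LetR G)

noncomputable def X1 : A1 := ι ℚ LetA.x
noncomputable def Y1 : A1 := ι ℚ LetA.y

variable {G : Type} [CommGroup G]

noncomputable def Xr : Ar G := ι ℚ LetR.x
noncomputable def Yr (s : G) : Ar G := ι ℚ (LetR.y s)

/-- `z = x + y_1`. -/
noncomputable def zet : Ar G := Xr + Yr 1

open scoped Classical in
/-- `z_s^δ = x + δ(s) y_s` with `δ(1) = 0`, `δ(s) = 1` otherwise. -/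
noncomputable def zdel (s : G) : Ar G := if s = 1 then Xr else Xr + Yr s

/-- The involutive automorphism `φ` of `A_r`: `φ(x) = z`, `φ(y_s) = z_s^δ - z`. -/
noncomputable def phi : Ar G →ₐ[ℚ] Ar G :=
  lift ℚ (fun l => match l with
    | LetR.x => zet
    | LetR.y s => zdel s - zet)

/-- The natural embedding `A_1 → A_r`, `x ↦ x`, `y ↦ y_1`. -/
noncomputable def jm : A1 →ₐ[ℚ] Ar G :=
  lift ℚ (fun l => match l with
    | LetA.x => Xr
    | LetA.y => Yr 1)

open scoped Classical in
/-- The anti-automorphism `τ` of `A_r`: `τ(x) = y_1`, `τ(y_1) = x`, `τ(y_s) = -y_s` (`s ≠ 1`). -/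
noncomputable def tauR : Ar G →ₗ[ℚ] Ar G :=
  (MulOpposite.opLinearEquiv ℚ).symm.toLinearMap ∘ₗ
    (lift ℚ (fun l => match l with
      | LetR.x => MulOpposite.op (Yr 1)
      | LetR.y s => MulOpposite.op (if s = 1 then Xr else -(Yr s)) ) :
        Ar G →ₐ[ℚ] (Ar G)ᵐᵒᵖ).toLinearMap

/-- The anti-automorphism `τ` of `A_1`: `τ(x) = y`, `τ(y) = x`. -/
noncomputable def tau1 : A1 →ₗ[ℚ] A1 :=
  (MulOpposite.opLinearEquiv ℚ).symm.toLinearMap ∘ₗ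
    (lift ℚ (fun l => match l with
      | LetA.x => MulOpposite.op Y1
      | LetA.y => MulOpposite.op X1) : A1 →ₐ[ℚ] A1ᵐᵒᵖ).toLinearMap

/-- `wordP [(a₁,s₁),...,(a_l,s_l)] = x^{a₁} y_{s₁} ⋯ x^{a_l} y_{s_l}`,
i.e. the word `z_{a₁+1, s₁} ⋯ z_{a_l+1, s_l}`. -/
noncomputable def wordP (L : List (ℕ × G)) : Ar G :=
  (L.map (fun p => Xr ^ p.1 * Yr p.2)).prod

/-- Cumulative-product reindexing of subscripts: this realizes the composition `I ∘ M_s`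
on subscript lists, sending `(s₁, s₂, …, s_l)` to `(s s₁, s s₁ s₂, …, s s₁ ⋯ s_l)`. -/
def cumul : G → List (ℕ × G) → List (ℕ × G)
  | _, [] => []
  | g, p :: L => (p.1, g * p.2) :: cumul (g * p.2) L

/-- All the data entering the definition of the diamond products `⋄_s`:
the harmonic product `*`, the maps `ψ_s = φ ∘ I ∘ M_s`, and the family of
`ℚ`-bilinear diamond products `D s : A_1 × A_r → A_r` (together with the
corestriction `D1` of `⋄_1` to `A_1 × A_1 → A_1`), each characterized by its
defining recursive rules. -/
structure DiamondSetup (G : Type) [CommGroup G] where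
  /-- the harmonic product -/
  hst : Ar G →ₗ[ℚ] Ar G →ₗ[ℚ] Ar G
  one_hst : ∀ w, hst 1 w = w
  hst_one : ∀ v, hst v 1 = v
  hst_xr : ∀ v w, hst (v * Xr) w = hst v w * Xr
  hst_xl : ∀ v w, hst v (w * Xr) = hst v w * Xr
  hst_yy : ∀ (v w : Ar G) (s t : G), hst (v * Yr s) (w * Yr t) =
      hst v (w * Yr t) * Yr s + hst (v * Yr s) w * Yr t + hst v w * (Xr * Yr (s * t))
  /-- the linear automorphisms `ψ_s = φ ∘ I ∘ M_s` -/
  psi : G → (Ar G ≃ₗ[ℚ] Ar G)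
  psi_spec : ∀ (s : G) (L : List (ℕ × G)) (a : ℕ),
      psi s (wordP L * Xr ^ a) = phi (wordP (cumul s L) * Xr ^ a)
  /-- the diamond products `⋄_s : A_1 × A_r → A_r` -/
  D : G → A1 →ₗ[ℚ] Ar G →ₗ[ℚ] Ar G
  one_D : ∀ (s : G) (w : Ar G), D s 1 w = w
  D_one : ∀ (s : G) (v : A1), D s v 1 = psi s (phi (jm v))
  Dxx : ∀ (s : G) (v : A1) (w : Ar G), D s (v * X1) (w * Xr) =
      D s v (w * Xr) * Xr - D s (v * Y1) w * Xr
  Dyx : ∀ (s : G) (v : A1) (w : Ar G), D s (v * Y1) (w * Xr) =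
      D s v (w * Xr) * Yr 1 + D s (v * Y1) w * Xr
  Dxy : ∀ (s : G) (v : A1) (w : Ar G), D s (v * X1) (w * Yr 1) =
      D s v (w * Yr 1) * Xr + D s (v * X1) w * Yr 1
  Dyy : ∀ (s : G) (v : A1) (w : Ar G), D s (v * Y1) (w * Yr 1) =
      D s v (w * Yr 1) * Yr 1 - D s (v * X1) w * Yr 1
  Dxyt : ∀ (s t : G), t ≠ 1 → ∀ (v : A1) (w : Ar G), D s (v * X1) (w * Yr t) =
      D s v (w * Yr t) * Xr + D s v (w * (Xr + Yr t)) * Yr t - D s (v * Y1) w * Yr t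
  Dyyt : ∀ (s t : G), t ≠ 1 → ∀ (v : A1) (w : Ar G), D s (v * Y1) (w * Yr t) =
      D s v (w * Yr t) * Yr 1 - D s v (w * (Xr + Yr t)) * Yr t + D s (v * Y1) w * Yr t
  /-- `⋄_1` as a product `A_1 × A_1 → A_1` -/
  D1 : A1 →ₗ[ℚ] A1 →ₗ[ℚ] A1
  D1_spec : ∀ u v : A1, jm (D1 u v) = D 1 u (jm v)

section AuxSpan

variable {X : Type}

theorem mem_span_words (u : FreeAlgebra ℚ X) :
    u ∈ Submodule.span ℚ (Set.range fun L : List X => (L.map (ι ℚ)).prod) := by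
  set M := Submodule.span ℚ (Set.range fun L : List X => (L.map (ι ℚ)).prod) with hM
  have hword : ∀ L : List X, (L.map (ι ℚ)).prod ∈ M :=
    fun L => Submodule.subset_span ⟨L, rfl⟩
  have key : ∀ b ∈ M, ∀ a ∈ M, a * b ∈ M := by
    intro b hb
    induction hb using Submodule.span_induction with
    | mem x hx =>
      obtain ⟨L, rfl⟩ := hx
      intro a ha
      induction ha using Submodule.span_induction with
      | mem y hy =>
        obtain ⟨L', rfl⟩ := hy
        have : ((L'.map (ι ℚ)).prod) * ((L.map (ι ℚ)).prod)
            = ((L' ++ L).map (ι (R := ℚ))).prod := by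
          simp
        rw [this]; exact hword _
      | zero => simpa using M.zero_mem
      | add a b _ _ iha ihb => rw [add_mul]; exact M.add_mem iha ihb
      | smul c a _ ih => rw [smul_mul_assoc]; exact M.smul_mem c ih
    | zero => intro a _; simpa using M.zero_mem
    | add b c _ _ ihb ihc =>
      intro a ha; rw [mul_add]; exact M.add_mem (ihb a ha) (ihc a ha)
    | smul c b _ ih =>
      intro a ha; rw [mul_smul_comm]; exact M.smul_mem c (ih a ha)
  induction u using FreeAlgebra.induction with
  | grade0 r =>
    have : (algebraMap ℚ (FreeAlgebra ℚ X)) r = r • (([] : List X).map (ι ℚ)).prod := by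
      simp [Algebra.algebraMap_eq_smul_one]
    rw [this]; exact M.smul_mem r (hword [])
  | grade1 x =>
    have : (ι ℚ x : FreeAlgebra ℚ X) = (([x] : List X).map (ι ℚ)).prod := by simp
    rw [this]; exact hword [x]
  | mul a b ha hb => exact key b hb a ha
  | add a b ha hb => exact M.add_mem ha hb

theorem freeAlgebra_rightRec {P : FreeAlgebra ℚ X → Prop}
    (h0 : P 0) (h1 : P 1)
    (hadd : ∀ a b, P a → P b → P (a + b))
    (hsmul : ∀ (c : ℚ) a, P a → P (c • a))
    (hmul : ∀ a, P a → ∀ l : X, P (a * ι ℚ l)) :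
    ∀ u, P u := by
  have hword : ∀ L : List X, P ((L.map (ι ℚ)).prod) := by
    intro L
    induction L using List.reverseRecOn with
    | nil => simpa using h1
    | append_singleton L l ih =>
      have := hmul _ ih l
      simpa using this
  intro u
  have hu := mem_span_words u
  induction hu using Submodule.span_induction with
  | mem x hx => obtain ⟨L, rfl⟩ := hx; exact hword L
  | zero => exact h0
  | add a b _ _ iha ihb => exact hadd _ _ iha ihb
  | smul c a _ ih => exact hsmul c _ ih

end AuxSpan
section AuxComp

variable {G : Type} [CommGroup G]

lemma Xr_def : (Xr : Ar G) = ι ℚ LetR.x := rfl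
lemma Yr_def (u : G) : (Yr u : Ar G) = ι ℚ (LetR.y u) := rfl

lemma wordP_nil : (wordP ([] : List (ℕ × G))) = 1 := by simp [wordP]

lemma wordP_cons (p : ℕ × G) (L : List (ℕ × G)) :
    wordP (p :: L) = Xr ^ p.1 * Yr p.2 * wordP L := by
  simp [wordP]

lemma parse_word (l : List (LetR G)) :
    ∃ (L : List (ℕ × G)) (a : ℕ), ((l.map (ι ℚ)).prod : Ar G) = wordP L * Xr ^ a := by
  induction l with
  | nil => exact ⟨[], 0, by simp [wordP_nil]⟩
  | cons hd tl ih =>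
    obtain ⟨L, a, hL⟩ := ih
    rw [List.map_cons, List.prod_cons, hL]
    cases hd with
    | x =>
      rw [← Xr_def]
      cases L with
      | nil =>
        refine ⟨[], a + 1, ?_⟩
        rw [wordP_nil, one_mul, one_mul, ← pow_succ']
      | cons p L' =>
        refine ⟨(p.1 + 1, p.2) :: L', a, ?_⟩
        rw [wordP_cons, wordP_cons]
        simp only [← mul_assoc, ← pow_succ']
    | y g =>
      refine ⟨(0, g) :: L, a, ?_⟩
      rw [wordP_cons, ← Yr_def]
      simp [mul_assoc]

lemma jm_X1 : (jm X1 : Ar G) = Xr := by simp [jm, X1, Xr]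
lemma jm_Y1 : (jm Y1 : Ar G) = Yr 1 := by simp [jm, Y1, Yr]
lemma phi_Xr : (phi (Xr : Ar G)) = zet := by simp [phi, Xr]
lemma phi_Yr (u : G) : phi (Yr u : Ar G) = zdel u - zet := by simp [phi, Yr]
lemma zdel_one : (zdel (1 : G)) = Xr := by simp [zdel]
lemma phi_zet : (phi (zet : Ar G)) = Xr := by
  rw [zet, map_add, phi_Xr, phi_Yr, zdel_one]
  abel

variable (S : DiamondSetup G)

lemma psi_one_apply (s : G) : S.psi s 1 = 1 := by
  have h := S.psi_spec s [] 0
  simpa [wordP_nil, cumul] using h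

lemma psi_Yr (s u : G) : S.psi s (Yr u) = zdel (s * u) - zet := by
  have h := S.psi_spec s [(0, u)] 0
  simp only [wordP_cons, wordP_nil, cumul, pow_zero, one_mul, mul_one] at h
  rw [h, phi_Yr]

lemma D_Y1_one (t : G) : S.D t Y1 1 = zet - zdel t := by
  rw [S.D_one, jm_Y1, phi_Yr, zdel_one]
  have h1 : (Xr : Ar G) - zet = -(Yr 1) := by rw [zet]; abel
  rw [h1, map_neg, psi_Yr, mul_one]
  abel

lemma psi_mul_Xr (s : G) (u : Ar G) : S.psi s (u * Xr) = S.psi s u * zet := by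
  have hu := mem_span_words u
  induction hu using Submodule.span_induction with
  | mem x hx =>
    obtain ⟨l, rfl⟩ := hx
    obtain ⟨L, a, hL⟩ := parse_word l
    rw [show ((fun L => (List.map (ι ℚ) L).prod) l : Ar G) = wordP L * Xr ^ a from hL, mul_assoc, ← pow_succ, S.psi_spec s L (a + 1), pow_succ, ← mul_assoc,
      map_mul, phi_Xr, ← S.psi_spec s L a]
  | zero => simp
  | add a b _ _ iha ihb => rw [add_mul, map_add, map_add, add_mul, iha, ihb]
  | smul c a _ ih => rw [smul_mul_assoc, map_smul, map_smul, smul_mul_assoc, ih]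

end AuxComp
section AuxMain

variable {G : Type} [CommGroup G] (S : DiamondSetup G)

/-- `(v(x+y)) ⋄_s w = (v ⋄_s w) z`. -/
lemma D_z1_left (s : G) (v : A1) (w : Ar G) :
    S.D s (v * (X1 + Y1)) w = S.D s v w * zet := by
  have hsplit : ∀ v : A1, S.D s (v * (X1 + Y1)) = S.D s (v * X1) + S.D s (v * Y1) := by
    intro v; rw [mul_add, map_add]
  induction w using freeAlgebra_rightRec with
  | h0 => simp
  | h1 =>
    have h2 : (jm (v * (X1 + Y1)) : Ar G) = jm v * zet := by
      rw [map_mul, map_add, jm_X1, jm_Y1, zet]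
    have h3 : phi ((jm v : Ar G) * zet) = phi (jm v) * Xr := by
      rw [map_mul, phi_zet]
    rw [S.D_one, S.D_one, h2, h3, psi_mul_Xr]
  | hadd a b iha ihb =>
    rw [map_add, map_add, iha, ihb, add_mul]
  | hsmul c a ih =>
    rw [map_smul, map_smul, ih, smul_mul_assoc]
  | hmul a _ l =>
    cases l with
    | x =>
      rw [← Xr_def, hsplit, LinearMap.add_apply, S.Dxx, S.Dyx, zet]
      noncomm_ring
    | y u =>
      rw [← Yr_def]
      by_cases hu : u = 1
      · subst hu
        rw [hsplit, LinearMap.add_apply, S.Dxy, S.Dyy, zet]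
        noncomm_ring
      · rw [hsplit, LinearMap.add_apply, S.Dxyt s u hu, S.Dyyt s u hu, zet]
        noncomm_ring

/-- `v ⋄_s (wz) = (v ⋄_s w) z`. -/
lemma D_zet_right (s : G) (v : A1) (w : Ar G) :
    S.D s v (w * zet) = S.D s v w * zet := by
  induction v using freeAlgebra_rightRec generalizing w with
  | h0 => simp
  | h1 => rw [S.one_D, S.one_D]
  | hadd a b iha ihb =>
    simp only [map_add, LinearMap.add_apply]
    rw [iha, ihb, add_mul]
  | hsmul c a ih =>
    simp only [map_smul, LinearMap.smul_apply]
    rw [ih, smul_mul_assoc]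
  | hmul a ih l =>
    have hexp0 : (w * zet : Ar G) = w * Xr + w * Yr 1 := by rw [zet, mul_add]
    have hkey : S.D s a (w * Xr) + S.D s a (w * Yr 1)
        = S.D s (a * X1) w + S.D s (a * Y1) w := by
      rw [← map_add (S.D s a), ← hexp0, ih, ← D_z1_left, mul_add, map_add,
        LinearMap.add_apply]
    have hA : S.D s a (w * Yr 1)
        = S.D s (a * X1) w + S.D s (a * Y1) w - S.D s a (w * Xr) := by
      rw [← hkey]; abel
    have hexp : w * zet = w * Xr + w * Yr 1 := by rw [zet, mul_add]
    cases l with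
    | x =>
      rw [show (ι ℚ LetA.x : A1) = X1 from rfl, hexp, map_add, S.Dxx, S.Dxy, hA,
        zet, mul_add]
      noncomm_ring
    | y =>
      rw [show (ι ℚ LetA.y : A1) = Y1 from rfl, hexp, map_add, S.Dyx, S.Dyy, hA,
        zet, mul_add]
      noncomm_ring

lemma D_key (s : G) (v : A1) (w : Ar G) :
    S.D s v (w * Xr) + S.D s v (w * Yr 1)
      = S.D s (v * X1) w + S.D s (v * Y1) w := by
  have hexp0 : (w * zet : Ar G) = w * Xr + w * Yr 1 := by rw [zet, mul_add]
  rw [← map_add (S.D s v), ← hexp0, D_zet_right, ← D_z1_left, mul_add, map_add,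
    LinearMap.add_apply]

end AuxMain
/-- For all `s, t ∈ μ_r`, `v ∈ A_1`, `w ∈ A_r`:
`v y ⋄_s w(z − z_t^δ) = (v y ⋄_s w − v ⋄_s w z_t^δ)(y ⋄_t 1)`. -/
theorem statement10 {G : Type} [CommGroup G] (S : DiamondSetup G)
    (s t : G) (v : A1) (w : Ar G) :
    S.D s (v * Y1) (w * (zet - zdel t)) =
      (S.D s (v * Y1) w - S.D s v (w * zdel t)) * (S.D t Y1 1) := by
  have hA : S.D s v (w * Yr 1)
      = S.D s (v * X1) w + S.D s (v * Y1) w - S.D s v (w * Xr) := by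
    rw [← D_key]; abel
  by_cases ht : t = 1
  · subst ht
    have hz : (zet : Ar G) - zdel 1 = Yr 1 := by rw [zet, zdel_one]; abel
    rw [D_Y1_one, hz, zdel_one, S.Dyy, hA]
    noncomm_ring
  · have hzd : (zdel t : Ar G) = Xr + Yr t := by simp [zdel, ht]
    have hz2 : (zet : Ar G) - zdel t = Yr 1 - Yr t := by rw [hzd, zet]; abel
    have hmw : w * (Yr 1 - Yr t) = w * Yr 1 - w * Yr t := mul_sub w _ _
    rw [D_Y1_one, hz2, hmw, map_sub, S.Dyy, S.Dyyt s t ht, hzd]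
    have hsum : S.D s v (w * (Xr + Yr t)) = S.D s v (w * Xr) + S.D s v (w * Yr t) := by
      rw [mul_add, map_add]
    rw [hsum, hA]
    noncomm_ring
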